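/- Let k be a field, let (L, K, M) be a field correspondence over k with M equal to the compositum L·K (minimality), let Ω be an algebraically closed field extension of k of transcendence degree 1, and fix a k-algebra embedding PQ : M → Ω with restrictions P = PQ|_L and Q = PQ|_K. Let G_gen be the connected component of the edge PQ in the full generic graph, E_∞ ⊆ Ω the subfield generated by the images of all vertices and edges of G_gen, G_P = Gal(E_∞/P(L)), G_Q = Gal(E_∞/Q(K)), G_{PQ} = Gal(E_∞/PQ(M)) = G_P ∩ G_Q, and A^{PQ} the subgroup of Aut_k(E_∞) generated by G_P and G_Q. If G_gen is a tree (connected with no cycles), then the canonical group homomorphism from the amalgamated free product G_P *_{G_{PQ}} G_Q to A^{PQ}, induced by the inclusions of G_P and G_Q into A^{PQ}, is an isomorphism of groups. -/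

import Mathlib

/-- A field extension `F/k` has transcendence degree one iff some single element
forms a transcendence basis of `F` over `k`. -/
def HasTrdegOne (k F : Type*) [Field k] [Field F] [Algebra k F] : Prop :=
  ∃ x : F, IsTranscendenceBasis k (fun _ : Unit => x)

section GenericGraph

variable {k M : Type*} [Field k] [Field M] [Algebra k M]
  (L K : IntermediateField k M)
  {Ω : Type*} [Field Ω] [Algebra k Ω]

/-- Two edges (that is, `k`-algebra homomorphisms `M → Ω`) of the full generic graph are
incident to a common vertex. -/
def EdgeStep (e e' : M →ₐ[k] Ω) : Prop :=
  e.comp L.val = e'.comp L.val ∨ e.comp K.val = e'.comp K.val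

/-- The edge `e` lies in the connected component `G_gen` of the distinguished edge `PQ`. -/
def InGenericComponent (PQ e : M →ₐ[k] Ω) : Prop :=
  Relation.ReflTransGen (EdgeStep L K) PQ e

/-- The subfield `E_∞ = E_{G_gen}` of `Ω` generated by the images of all vertices and
edges of the connected component `G_gen` of `PQ`. -/
noncomputable def componentField (PQ : M →ₐ[k] Ω) : IntermediateField k Ω :=
  (⨆ e : {e : M →ₐ[k] Ω // InGenericComponent L K PQ e}, (e.1).fieldRange) ⊔
  (⨆ e : {e : M →ₐ[k] Ω // InGenericComponent L K PQ e}, ((e.1).comp L.val).fieldRange) ⊔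
  (⨆ e : {e : M →ₐ[k] Ω // InGenericComponent L K PQ e}, ((e.1).comp K.val).fieldRange)

/-- `G_P = Gal(E_∞ / P(L))`. -/
noncomputable def galP (PQ : M →ₐ[k] Ω) :
    Subgroup (componentField L K PQ ≃ₐ[k] componentField L K PQ) :=
  fixingSubgroup (componentField L K PQ ≃ₐ[k] componentField L K PQ)
    {z : componentField L K PQ | (z : Ω) ∈ (PQ.comp L.val).fieldRange}

/-- `G_Q = Gal(E_∞ / Q(K))`. -/
noncomputable def galQ (PQ : M →ₐ[k] Ω) :
    Subgroup (componentField L K PQ ≃ₐ[k] componentField L K PQ) :=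
  fixingSubgroup (componentField L K PQ ≃ₐ[k] componentField L K PQ)
    {z : componentField L K PQ | (z : Ω) ∈ (PQ.comp K.val).fieldRange}

/-- `G_{PQ} = Gal(E_∞ / PQ(M))`. -/
noncomputable def galPQ (PQ : M →ₐ[k] Ω) :
    Subgroup (componentField L K PQ ≃ₐ[k] componentField L K PQ) :=
  fixingSubgroup (componentField L K PQ ≃ₐ[k] componentField L K PQ)
    {z : componentField L K PQ | (z : Ω) ∈ PQ.fieldRange}

/-- `A^{PQ}`: the subgroup of `Aut_k(E_∞)` generated by `G_P` and `G_Q`. -/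
noncomputable def APQ (PQ : M →ₐ[k] Ω) :
    Subgroup (componentField L K PQ ≃ₐ[k] componentField L K PQ) :=
  galP L K PQ ⊔ galQ L K PQ

lemma galPQ_le_galP (PQ : M →ₐ[k] Ω) : galPQ L K PQ ≤ galP L K PQ := by
  intro σ hσ
  rw [galP, mem_fixingSubgroup_iff]
  rw [galPQ, mem_fixingSubgroup_iff] at hσ
  intro y hy
  apply hσ
  obtain ⟨x, hx⟩ := hy
  exact ⟨L.val x, hx⟩

lemma galPQ_le_galQ (PQ : M →ₐ[k] Ω) : galPQ L K PQ ≤ galQ L K PQ := by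
  intro σ hσ
  rw [galQ, mem_fixingSubgroup_iff]
  rw [galPQ, mem_fixingSubgroup_iff] at hσ
  intro y hy
  apply hσ
  obtain ⟨x, hx⟩ := hy
  exact ⟨K.val x, hx⟩

/-- The inclusions `G_{PQ} → G_P` and `G_{PQ} → G_Q`, as the data defining the
amalgamated free product `G_P *_{G_{PQ}} G_Q`. -/
noncomputable def amalgMaps (PQ : M →ₐ[k] Ω) :
    ∀ b : Bool, galPQ L K PQ →* ↥(cond b (galP L K PQ) (galQ L K PQ))
  | true => Subgroup.inclusion (galPQ_le_galP L K PQ)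
  | false => Subgroup.inclusion (galPQ_le_galQ L K PQ)

/-- The canonical maps `G_P → A^{PQ}` and `G_Q → A^{PQ}`. -/
noncomputable def intoAPQ (PQ : M →ₐ[k] Ω) :
    ∀ b : Bool, ↥(cond b (galP L K PQ) (galQ L K PQ)) →* APQ L K PQ
  | true => Subgroup.inclusion le_sup_left
  | false => Subgroup.inclusion le_sup_right

/-- The canonical homomorphism `G_P *_{G_{PQ}} G_Q → A^{PQ}` induced by the inclusions of
`G_P` and `G_Q` into `A^{PQ}`. -/
noncomputable def amalgamToAPQ (PQ : M →ₐ[k] Ω) :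
    Monoid.PushoutI (amalgMaps L K PQ) →* APQ L K PQ :=
  Monoid.PushoutI.lift (intoAPQ L K PQ)
    (Subgroup.inclusion (le_trans (galPQ_le_galP L K PQ) le_sup_left))
    (by intro b; cases b <;> rfl)

/-- The full generic graph, as a simple graph on the disjoint union of the blue vertices
(`k`-algebra homomorphisms `L → Ω`) and the red vertices (`k`-algebra homomorphisms
`K → Ω`); a blue and a red vertex are adjacent iff they are the two restrictions of a
common `k`-algebra homomorphism `M → Ω`. -/
def genericGraph (Ω : Type*) [Field Ω] [Algebra k Ω] :
    SimpleGraph ((↥L →ₐ[k] Ω) ⊕ (↥K →ₐ[k] Ω)) where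
  Adj v w :=
    match v, w with
    | Sum.inl p, Sum.inr q => ∃ e : M →ₐ[k] Ω, e.comp L.val = p ∧ e.comp K.val = q
    | Sum.inr q, Sum.inl p => ∃ e : M →ₐ[k] Ω, e.comp L.val = p ∧ e.comp K.val = q
    | _, _ => False
  symm := ⟨by rintro (p | q) (p' | q') h <;> simp_all⟩
  loopless := ⟨by rintro (p | q) h <;> simp_all⟩

end GenericGraph

namespace AmalgamAux

variable {k M : Type*} [Field k] [Field M] [Algebra k M]
  {Ω : Type*} [Field Ω] [Algebra k Ω]
  (L K : IntermediateField k M) (PQ : M →ₐ[k] Ω)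

/-- Abbreviation for the field `E_∞`. -/
noncomputable abbrev CF : IntermediateField k Ω := componentField L K PQ

/-- Abbreviation for the automorphism group of `E_∞`. -/
abbrev Gm : Type _ := CF L K PQ ≃ₐ[k] CF L K PQ

lemma mem_CF {e : M →ₐ[k] Ω} (hc : InGenericComponent L K PQ e) (x : M) :
    e x ∈ CF L K PQ := by
  have h1 : e.fieldRange ≤ CF L K PQ :=
    le_trans
      (le_iSup (fun e : {e : M →ₐ[k] Ω // InGenericComponent L K PQ e} => (e.1).fieldRange)
        ⟨e, hc⟩)
      (le_trans le_sup_left le_sup_left)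
  exact h1 ⟨x, rfl⟩

/-- Corestriction of an algebra hom to `E_∞`. -/
noncomputable def resCF (f : M →ₐ[k] Ω) (h : ∀ x, f x ∈ CF L K PQ) : M →ₐ[k] ↥(CF L K PQ) where
  toFun x := ⟨f x, h x⟩
  map_one' := Subtype.ext (map_one f)
  map_mul' x y := Subtype.ext (map_mul f x y)
  map_zero' := Subtype.ext (map_zero f)
  map_add' x y := Subtype.ext (map_add f x y)
  commutes' r := Subtype.ext (f.commutes r)

/-- The distinguished edge `PQ`, corestricted to `E_∞`. -/
noncomputable def PQt : M →ₐ[k] ↥(CF L K PQ) :=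
  resCF L K PQ PQ (mem_CF L K PQ Relation.ReflTransGen.refl)

/-- An edge with values in `E_∞`, as an edge with values in `Ω`. -/
noncomputable def toOm (f : M →ₐ[k] ↥(CF L K PQ)) : M →ₐ[k] Ω := (CF L K PQ).val.comp f

lemma toOm_PQt : toOm L K PQ (PQt L K PQ) = PQ := by ext x; rfl

lemma comp_PQt : InGenericComponent L K PQ (toOm L K PQ (PQt L K PQ)) := by
  rw [toOm_PQt]; exact Relation.ReflTransGen.refl

/-- Action of an automorphism of `E_∞` on an edge. -/
noncomputable def actE (g : Gm L K PQ) (f : M →ₐ[k] ↥(CF L K PQ)) : M →ₐ[k] ↥(CF L K PQ) :=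
  (g.toAlgHom).comp f

lemma actE_one (f : M →ₐ[k] ↥(CF L K PQ)) : actE L K PQ 1 f = f := by
  ext x; rfl

lemma actE_mul (g g' : Gm L K PQ) (f : M →ₐ[k] ↥(CF L K PQ)) :
    actE L K PQ (g * g') f = actE L K PQ g (actE L K PQ g' f) := by
  ext x; rfl

lemma val_comp_inj {A : Type*} [Semiring A] [Algebra k A]
    {u v : A →ₐ[k] ↥(CF L K PQ)}
    (h : (CF L K PQ).val.comp u = (CF L K PQ).val.comp v) : u = v := by
  ext x
  exact AlgHom.congr_fun h x

lemma act_comp_inj {A : Type*} [Semiring A] [Algebra k A] (g : Gm L K PQ)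
    {u v : A →ₐ[k] ↥(CF L K PQ)}
    (h : (g.toAlgHom).comp u = (g.toAlgHom).comp v) : u = v := by
  ext x
  exact congrArg Subtype.val (g.injective (AlgHom.congr_fun h x))

lemma fixP {σ : Gm L K PQ} (hσ : σ ∈ galP L K PQ) :
    (actE L K PQ σ (PQt L K PQ)).comp L.val = (PQt L K PQ).comp L.val := by
  rw [galP, mem_fixingSubgroup_iff] at hσ
  ext x
  exact congrArg Subtype.val (hσ (PQt L K PQ (L.val x)) ⟨x, rfl⟩)

lemma fixQ {σ : Gm L K PQ} (hσ : σ ∈ galQ L K PQ) :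
    (actE L K PQ σ (PQt L K PQ)).comp K.val = (PQt L K PQ).comp K.val := by
  rw [galQ, mem_fixingSubgroup_iff] at hσ
  ext x
  exact congrArg Subtype.val (hσ (PQt L K PQ (K.val x)) ⟨x, rfl⟩)

lemma mem_galPQ_of_act_eq {σ : Gm L K PQ}
    (h : actE L K PQ σ (PQt L K PQ) = PQt L K PQ) : σ ∈ galPQ L K PQ := by
  rw [galPQ, mem_fixingSubgroup_iff]
  rintro y ⟨m, hm⟩
  have hy : PQt L K PQ m = y := Subtype.ext hm
  rw [← hy]
  exact AlgHom.congr_fun h m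

lemma galPQ_fix {σ : Gm L K PQ} (hσ : σ ∈ galPQ L K PQ) :
    actE L K PQ σ (PQt L K PQ) = PQt L K PQ := by
  rw [galPQ, mem_fixingSubgroup_iff] at hσ
  ext m
  exact congrArg Subtype.val (hσ (PQt L K PQ m) ⟨m, rfl⟩)

lemma mem_galPQ_of_fix (hmin : L ⊔ K = ⊤) {σ : Gm L K PQ}
    (hL : (actE L K PQ σ (PQt L K PQ)).comp L.val = (PQt L K PQ).comp L.val)
    (hK : (actE L K PQ σ (PQt L K PQ)).comp K.val = (PQt L K PQ).comp K.val) :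
    σ ∈ galPQ L K PQ := by
  apply mem_galPQ_of_act_eq
  set f := actE L K PQ σ (PQt L K PQ) with hf
  set g := PQt L K PQ with hg
  have hinv : ∀ x ∈ AlgHom.equalizer f g, x⁻¹ ∈ AlgHom.equalizer f g := by
    intro x hx
    have hx' : f x = g x := hx
    show f x⁻¹ = g x⁻¹
    rw [map_inv₀, map_inv₀, hx']
  set EqIF : IntermediateField k M := (AlgHom.equalizer f g).toIntermediateField hinv with hEq
  have hLle : L ≤ EqIF := by
    intro x hx
    exact AlgHom.congr_fun hL (⟨x, hx⟩ : ↥L)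
  have hKle : K ≤ EqIF := by
    intro x hx
    exact AlgHom.congr_fun hK (⟨x, hx⟩ : ↥K)
  have htop : (⊤ : IntermediateField k M) ≤ EqIF := hmin ▸ sup_le hLle hKle
  ext x
  have hx : f x = g x := htop (IntermediateField.mem_top (x := x))
  exact congrArg Subtype.val hx

/-- The connected component of `Sum.inl P` in the generic graph, as a vertex set. -/
abbrev SS : Set ((↥L →ₐ[k] Ω) ⊕ (↥K →ₐ[k] Ω)) :=
  {w | (genericGraph L K Ω).Reachable (Sum.inl (PQ.comp L.val)) w}

/-- The generic graph `G_gen`, i.e. the induced graph on the component of `PQ`. -/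
abbrev TG : SimpleGraph ↥(SS L K PQ) := (genericGraph L K Ω).induce (SS L K PQ)

/-- The `b`-colored vertex of an edge (`true` is blue/`L`, `false` is red/`K`). -/
noncomputable def vC (b : Bool) (f : M →ₐ[k] ↥(CF L K PQ)) :
    (↥L →ₐ[k] Ω) ⊕ (↥K →ₐ[k] Ω) :=
  cond b (Sum.inl ((toOm L K PQ f).comp L.val)) (Sum.inr ((toOm L K PQ f).comp K.val))

lemma reach_of_comp {e : M →ₐ[k] Ω} (hc : InGenericComponent L K PQ e) :
    Sum.inl (e.comp L.val) ∈ SS L K PQ ∧ Sum.inr (e.comp K.val) ∈ SS L K PQ := by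
  induction hc with
  | refl =>
    refine ⟨SimpleGraph.Reachable.refl _, SimpleGraph.Adj.reachable ?_⟩
    exact ⟨PQ, rfl, rfl⟩
  | tail hab hbc ih =>
    rename_i b c
    rcases hbc with hL | hK
    · have h1 : Sum.inl (c.comp L.val) ∈ SS L K PQ := hL ▸ ih.1
      refine ⟨h1, h1.trans (SimpleGraph.Adj.reachable ?_)⟩
      exact ⟨c, rfl, rfl⟩
    · have h2 : Sum.inr (c.comp K.val) ∈ SS L K PQ := hK ▸ ih.2
      refine ⟨h2.trans (SimpleGraph.Adj.reachable ?_), h2⟩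
      exact (SimpleGraph.adj_symm _ ⟨c, rfl, rfl⟩)

lemma vmem (b : Bool) (f : M →ₐ[k] ↥(CF L K PQ))
    (hc : InGenericComponent L K PQ (toOm L K PQ f)) : vC L K PQ b f ∈ SS L K PQ := by
  cases b
  · exact (reach_of_comp L K PQ hc).2
  · exact (reach_of_comp L K PQ hc).1

/-- The `b`-colored vertex of an edge, as a vertex of `G_gen`. -/
noncomputable def VV (f : M →ₐ[k] ↥(CF L K PQ))
    (hc : InGenericComponent L K PQ (toOm L K PQ f)) (b : Bool) : ↥(SS L K PQ) :=
  ⟨vC L K PQ b f, vmem L K PQ b f hc⟩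

lemma adjT (f : M →ₐ[k] ↥(CF L K PQ))
    (hc : InGenericComponent L K PQ (toOm L K PQ f)) (b : Bool) :
    (TG L K PQ).Adj (VV L K PQ f hc b) (VV L K PQ f hc (!b)) := by
  cases b
  · exact SimpleGraph.adj_symm _ (⟨toOm L K PQ f, rfl, rfl⟩ :
      (genericGraph L K Ω).Adj (Sum.inl ((toOm L K PQ f).comp L.val))
        (Sum.inr ((toOm L K PQ f).comp K.val)))
  · exact (⟨toOm L K PQ f, rfl, rfl⟩ :
      (genericGraph L K Ω).Adj (Sum.inl ((toOm L K PQ f).comp L.val))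
        (Sum.inr ((toOm L K PQ f).comp K.val)))

lemma vC_ne_not (b : Bool) (f f' : M →ₐ[k] ↥(CF L K PQ)) :
    vC L K PQ (!b) f ≠ vC L K PQ b f' := by
  cases b <;> simp [vC]

lemma vC_eq_iff (b : Bool) (f f' : M →ₐ[k] ↥(CF L K PQ)) :
    vC L K PQ b f = vC L K PQ b f' ↔
      cond b (f.comp L.val = f'.comp L.val) (f.comp K.val = f'.comp K.val) := by
  cases b <;>
    simp only [vC, cond_true, cond_false, Sum.inl.injEq, Sum.inr.injEq] <;>
    constructor <;> intro h
  · exact val_comp_inj L K PQ h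
  · rw [show (toOm L K PQ f).comp K.val = (CF L K PQ).val.comp (f.comp K.val) from rfl,
      show (toOm L K PQ f').comp K.val = (CF L K PQ).val.comp (f'.comp K.val) from rfl, h]
  · exact val_comp_inj L K PQ h
  · rw [show (toOm L K PQ f).comp L.val = (CF L K PQ).val.comp (f.comp L.val) from rfl,
      show (toOm L K PQ f').comp L.val = (CF L K PQ).val.comp (f'.comp L.val) from rfl, h]

lemma vC_act_eq_iff (g : Gm L K PQ) (b : Bool) (f f' : M →ₐ[k] ↥(CF L K PQ)) :
    vC L K PQ b (actE L K PQ g f) = vC L K PQ b (actE L K PQ g f') ↔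
      vC L K PQ b f = vC L K PQ b f' := by
  rw [vC_eq_iff, vC_eq_iff]
  cases b <;> simp only [cond_true, cond_false] <;> constructor <;> intro h
  · exact act_comp_inj L K PQ g h
  · show (g.toAlgHom.comp f).comp K.val = (g.toAlgHom.comp f').comp K.val
    rw [AlgHom.comp_assoc, AlgHom.comp_assoc, h]
  · exact act_comp_inj L K PQ g h
  · show (g.toAlgHom.comp f).comp L.val = (g.toAlgHom.comp f').comp L.val
    rw [AlgHom.comp_assoc, AlgHom.comp_assoc, h]

lemma vC_fix (b : Bool) {σ : Gm L K PQ}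
    (h1 : σ ∈ cond b (galP L K PQ) (galQ L K PQ)) :
    vC L K PQ b (actE L K PQ σ (PQt L K PQ)) = vC L K PQ b (PQt L K PQ) := by
  rw [vC_eq_iff]
  cases b
  · exact fixQ L K PQ h1
  · exact fixP L K PQ h1

lemma vO_move (hmin : L ⊔ K = ⊤) (b : Bool) {σ : Gm L K PQ}
    (h1 : σ ∈ cond b (galP L K PQ) (galQ L K PQ)) (h2 : σ ∉ galPQ L K PQ) :
    vC L K PQ (!b) (actE L K PQ σ (PQt L K PQ)) ≠ vC L K PQ (!b) (PQt L K PQ) := by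
  intro h
  rw [vC_eq_iff] at h
  apply h2
  cases b
  · exact mem_galPQ_of_fix L K PQ hmin h (fixQ L K PQ h1)
  · exact mem_galPQ_of_fix L K PQ hmin (fixP L K PQ h1) h

lemma edge_step (g : Gm L K PQ) (b : Bool) {σ : Gm L K PQ}
    (h1 : σ ∈ cond b (galP L K PQ) (galQ L K PQ)) :
    EdgeStep L K (toOm L K PQ (actE L K PQ g (PQt L K PQ)))
      (toOm L K PQ (actE L K PQ (g * σ) (PQt L K PQ))) := by
  have key : vC L K PQ b (actE L K PQ (g * σ) (PQt L K PQ)) =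
      vC L K PQ b (actE L K PQ g (PQt L K PQ)) := by
    rw [actE_mul, vC_act_eq_iff]
    exact vC_fix L K PQ b h1
  rw [vC_eq_iff] at key
  cases b
  · right
    have : (toOm L K PQ (actE L K PQ (g * σ) (PQt L K PQ))).comp K.val =
        (CF L K PQ).val.comp ((actE L K PQ (g * σ) (PQt L K PQ)).comp K.val) := rfl
    rw [this, key]; rfl
  · left
    have : (toOm L K PQ (actE L K PQ (g * σ) (PQt L K PQ))).comp L.val =
        (CF L K PQ).val.comp ((actE L K PQ (g * σ) (PQt L K PQ)).comp L.val) := rfl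
    rw [this, key]; rfl

/-- Reduced alternating words: `Alt b₁ bl g` means `g` is a product of a reduced word
alternating between `G_P \ G_PQ` and `G_Q \ G_PQ`, with first letter of type `b₁` and
last letter of type `bl`. -/
inductive Alt : Bool → Bool → Gm L K PQ → Prop
  | single (b : Bool) (σ : Gm L K PQ) (h1 : σ ∈ cond b (galP L K PQ) (galQ L K PQ))
      (h2 : σ ∉ galPQ L K PQ) : Alt b b σ
  | snoc (b1 bl b' : Bool) (g σ : Gm L K PQ) (halt : Alt b1 bl g) (hne : bl ≠ b')
      (h1 : σ ∈ cond b' (galP L K PQ) (galQ L K PQ))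
      (h2 : σ ∉ galPQ L K PQ) : Alt b1 b' (g * σ)

lemma bool_ne_iff {a b : Bool} (h : a ≠ b) : b = !a := by
  cases a <;> cases b <;> simp_all

lemma main_walk (hmin : L ⊔ K = ⊤)
    (hac : (TG L K PQ).IsAcyclic)
    {b1 bl : Bool} {g : Gm L K PQ} (halt : Alt L K PQ b1 bl g) :
    ∃ hc : InGenericComponent L K PQ (toOm L K PQ (actE L K PQ g (PQt L K PQ))),
      ∃ p : (TG L K PQ).Walk (VV L K PQ (actE L K PQ g (PQt L K PQ)) hc bl)
        (VV L K PQ (PQt L K PQ) (comp_PQt L K PQ) (!b1)),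
        p.IsPath ∧ VV L K PQ (actE L K PQ g (PQt L K PQ)) hc (!bl) ∉ p.support ∧
          VV L K PQ (PQt L K PQ) (comp_PQt L K PQ) b1 ∈ p.support := by
  induction halt with
  | single σ h1 h2 =>
    have hc : InGenericComponent L K PQ (toOm L K PQ (actE L K PQ σ (PQt L K PQ))) := by
      refine Relation.ReflTransGen.tail (Relation.ReflTransGen.refl) ?_
      have := edge_step L K PQ 1 b1 h1
      rwa [one_mul, actE_one, toOm_PQt] at this
    refine ⟨hc, ?_⟩
    have hfix : VV L K PQ (actE L K PQ σ (PQt L K PQ)) hc b1 =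
        VV L K PQ (PQt L K PQ) (comp_PQt L K PQ) b1 :=
      Subtype.ext (vC_fix L K PQ b1 h1)
    have hadj : (TG L K PQ).Adj (VV L K PQ (actE L K PQ σ (PQt L K PQ)) hc b1)
        (VV L K PQ (PQt L K PQ) (comp_PQt L K PQ) (!b1)) := by
      rw [hfix]
      exact adjT L K PQ (PQt L K PQ) (comp_PQt L K PQ) b1
    refine ⟨SimpleGraph.Walk.cons hadj SimpleGraph.Walk.nil, ?_, ?_, ?_⟩
    · simp only [SimpleGraph.Walk.isPath_def, SimpleGraph.Walk.support_cons,
        SimpleGraph.Walk.support_nil]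
      simp [hadj.ne]
    · intro hmem
      simp only [SimpleGraph.Walk.support_cons, SimpleGraph.Walk.support_nil,
        List.mem_cons, List.not_mem_nil, or_false] at hmem
      rcases hmem with h | h
      · exact vC_ne_not L K PQ b1 _ _ (congrArg Subtype.val h)
      · exact vO_move L K PQ hmin b1 h1 h2 (congrArg Subtype.val h)
    · simp only [SimpleGraph.Walk.support_cons, SimpleGraph.Walk.support_nil,
        List.mem_cons]
      left
      exact hfix.symm
  | snoc bl b' g σ halt hne h1 h2 ih =>
    obtain ⟨hc, p, hpath, hexcl, hincl⟩ := ih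
    have hblb' : bl = !b' := by
      cases bl <;> cases b' <;> first | rfl | exact absurd rfl hne
    have hc' : InGenericComponent L K PQ
        (toOm L K PQ (actE L K PQ (g * σ) (PQt L K PQ))) :=
      Relation.ReflTransGen.tail hc (edge_step L K PQ g b' h1)
    refine ⟨hc', ?_⟩
    -- the new vertex `z_{n+1}` equals the `(!bl) = b'`-colored vertex of the old edge
    have hv1 : VV L K PQ (actE L K PQ (g * σ) (PQt L K PQ)) hc' b' =
        VV L K PQ (actE L K PQ g (PQt L K PQ)) hc (!bl) := by
      refine Subtype.ext ?_
      show vC L K PQ b' _ = vC L K PQ (!bl) _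
      rw [hblb', Bool.not_not, actE_mul, vC_act_eq_iff]
      exact vC_fix L K PQ b' h1
    have hadj : (TG L K PQ).Adj (VV L K PQ (actE L K PQ (g * σ) (PQt L K PQ)) hc' b')
        (VV L K PQ (actE L K PQ g (PQt L K PQ)) hc bl) := by
      rw [hv1]
      exact (adjT L K PQ (actE L K PQ g (PQt L K PQ)) hc bl).symm
    refine ⟨SimpleGraph.Walk.cons hadj p, ?_, ?_, ?_⟩
    · refine SimpleGraph.Walk.IsPath.cons hpath ?_
      rw [hv1]
      exact hexcl
    · -- the next vertex `z_{n+2}` is not on the new walk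
      simp only [SimpleGraph.Walk.support_cons, List.mem_cons, not_or]
      constructor
      · intro h
        have h' := congrArg Subtype.val h
        exact vC_ne_not L K PQ b' _ _ h'
      · -- `z_{n+2} ∉ p.support`, by the tree property
        classical
        intro hb
        have hq : (p.takeUntil _ hb).IsPath := hpath.takeUntil hb
        have adjAB : (TG L K PQ).Adj (VV L K PQ (actE L K PQ g (PQt L K PQ)) hc bl)
            (VV L K PQ (actE L K PQ (g * σ) (PQt L K PQ)) hc' b') := hadj.symm
        have adjBC : (TG L K PQ).Adj (VV L K PQ (actE L K PQ (g * σ) (PQt L K PQ)) hc' b')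
            (VV L K PQ (actE L K PQ (g * σ) (PQt L K PQ)) hc' (!b')) :=
          adjT L K PQ (actE L K PQ (g * σ) (PQt L K PQ)) hc' b'
        have hAC : VV L K PQ (actE L K PQ g (PQt L K PQ)) hc bl ≠
            VV L K PQ (actE L K PQ (g * σ) (PQt L K PQ)) hc' (!b') := by
          intro h
          have h' : vC L K PQ bl (actE L K PQ g (PQt L K PQ)) =
              vC L K PQ (!b') (actE L K PQ (g * σ) (PQt L K PQ)) := congrArg Subtype.val h
          rw [hblb'] at h'
          rw [actE_mul, vC_act_eq_iff] at h'
          exact vO_move L K PQ hmin b' h1 h2 h'.symm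
        have hr1 : (SimpleGraph.Walk.cons adjBC SimpleGraph.Walk.nil).IsPath := by
          refine SimpleGraph.Walk.IsPath.nil.cons ?_
          simp only [SimpleGraph.Walk.support_nil, List.mem_singleton]
          exact adjBC.ne
        have hr : (SimpleGraph.Walk.cons adjAB
            (SimpleGraph.Walk.cons adjBC SimpleGraph.Walk.nil)).IsPath := by
          refine hr1.cons ?_
          simp only [SimpleGraph.Walk.support_cons, SimpleGraph.Walk.support_nil,
            List.mem_cons, List.mem_singleton, List.not_mem_nil, or_false, not_or]
          exact ⟨adjAB.ne, hAC⟩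
        have huniq := hac.path_unique ⟨p.takeUntil _ hb, hq⟩
          ⟨SimpleGraph.Walk.cons adjAB (SimpleGraph.Walk.cons adjBC SimpleGraph.Walk.nil), hr⟩
        have hBq : VV L K PQ (actE L K PQ (g * σ) (PQt L K PQ)) hc' b' ∈
            (p.takeUntil _ hb).support := by
          have hsupp := congrArg
            (fun q : (TG L K PQ).Path (VV L K PQ (actE L K PQ g (PQt L K PQ)) hc bl)
              (VV L K PQ (actE L K PQ (g * σ) (PQt L K PQ)) hc' (!b')) => (q.1).support) huniq
          simp only [SimpleGraph.Walk.support_cons, SimpleGraph.Walk.support_nil] at hsupp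
          rw [hsupp]
          simp
        have hBp : VV L K PQ (actE L K PQ (g * σ) (PQt L K PQ)) hc' b' ∈ p.support :=
          SimpleGraph.Walk.support_takeUntil_subset _ hb hBq
        rw [hv1] at hBp
        exact hexcl hBp
    · simp only [SimpleGraph.Walk.support_cons, List.mem_cons]
      right
      exact hincl

lemma list_to_alt :
    ∀ (l : List (Σ b : Bool, ↥(cond b (galP L K PQ) (galQ L K PQ)))) (hl : l ≠ [])
      (_ : l.Chain' fun a b => a.1 ≠ b.1)
      (_ : ∀ p ∈ l, (↑p.2 : Gm L K PQ) ∉ galPQ L K PQ),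
      Alt L K PQ (l.head hl).1 ((l.getLast hl).1)
        ((l.map fun p => (↑p.2 : Gm L K PQ)).prod) := by
  intro l
  induction l using List.reverseRecOn with
  | nil => intro hl _ _; exact absurd rfl hl
  | append_singleton l a ih =>
    intro hl hchain hcond
    rcases eq_or_ne l [] with rfl | hl'
    · simpa using Alt.single (L := L) (K := K) (PQ := PQ) a.1 (↑a.2 : Gm L K PQ) a.2.2 (hcond a (by simp))
    · obtain ⟨hchl, -, hrel⟩ := List.isChain_append.mp hchain
      have hlast : (l ++ [a]).getLast hl = a := by
        rw [List.getLast_append_of_ne_nil (by simp)]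
        rfl
        exact List.cons_ne_nil a []
      have hhead : (l ++ [a]).head hl = l.head hl' := List.head_append_left hl'
      have hprod : ((l ++ [a]).map fun p => (↑p.2 : Gm L K PQ)).prod =
          (l.map fun p => (↑p.2 : Gm L K PQ)).prod * ↑a.2 := by
        simp
      have hne : (l.getLast hl').1 ≠ a.1 := by
        refine hrel _ ?_ a rfl
        rw [List.getLast?_eq_getLast_of_ne_nil hl']
        rfl
      rw [hlast, hhead, hprod]
      exact Alt.snoc _ _ _ _ _
        (ih hl' hchl (fun p hp => hcond p (by simp [hp]))) hne a.2.2
        (hcond a (by simp))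

lemma final_contradiction (hmin : L ⊔ K = ⊤) (hac : (TG L K PQ).IsAcyclic)
    {b1 bl : Bool} {g : Gm L K PQ} (halt : Alt L K PQ b1 bl g)
    (hgfix : actE L K PQ g (PQt L K PQ) = PQt L K PQ) : False := by
  obtain ⟨hcmp, p, hpath, hexcl, hincl⟩ := main_walk L K PQ hmin hac halt
  have hVeq : ∀ b : Bool, VV L K PQ (actE L K PQ g (PQt L K PQ)) hcmp b =
      VV L K PQ (PQt L K PQ) (comp_PQt L K PQ) b :=
    fun b => Subtype.ext (congrArg (fun f => vC L K PQ b f) hgfix)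
  rcases eq_or_ne bl b1 with hbb | hbb
  · subst hbb
    apply hexcl
    rw [hVeq (!bl)]
    exact p.end_mem_support
  · have hb1 : (!bl) = b1 := by cases bl <;> cases b1 <;> simp_all
    apply hexcl
    rw [hVeq (!bl), hb1]
    exact hincl

end AmalgamAux

/-- Proposition `tree_amalgamated_free_product`.
For a minimal field correspondence (`M = L·K`), if the generic graph `G_gen` (the
connected component of the edge `PQ`) is a tree, then the canonical homomorphism
`G_P *_{G_{PQ}} G_Q → A^{PQ}` is an isomorphism of groups. -/
theorem amalgam_iso_of_tree
    (k M : Type*) [Field k] [Field M] [Algebra k M]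
    -- `M` is a finitely generated field extension of `k` of transcendence degree 1
    (hfg : (⊤ : IntermediateField k M).FG)
    (htr : HasTrdegOne k M)
    -- the two intermediate fields `L` and `K`, with `M/L` and `M/K` finite and separable
    (L K : IntermediateField k M)
    [FiniteDimensional L M] [FiniteDimensional K M]
    [Algebra.IsSeparable L M] [Algebra.IsSeparable K M]
    -- minimality: `M = L·K`
    (hmin : L ⊔ K = ⊤)
    -- an algebraically closed extension `Ω` of `k` of transcendence degree 1
    (Ω : Type*) [Field Ω] [Algebra k Ω] [IsAlgClosed Ω]
    (htrΩ : HasTrdegOne k Ω)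
    -- a fixed `k`-algebra embedding `PQ : M → Ω`
    (PQ : M →ₐ[k] Ω)
    -- `G_gen` is a tree
    (htree : ((genericGraph L K Ω).induce
      {w | (genericGraph L K Ω).Reachable (Sum.inl (PQ.comp L.val)) w}).IsTree) :
    Function.Bijective (amalgamToAPQ L K PQ) := by
  classical
  constructor
  · -- **injectivity**
    have hφinj : ∀ b, Function.Injective (amalgMaps L K PQ b) := by
      intro b
      cases b
      · exact Subgroup.inclusion_injective (galPQ_le_galQ L K PQ)
      · exact Subgroup.inclusion_injective (galPQ_le_galP L K PQ)
    set Λ : Monoid.PushoutI (amalgMaps L K PQ) →*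
        (componentField L K PQ ≃ₐ[k] componentField L K PQ) :=
      ((APQ L K PQ).subtype).comp (amalgamToAPQ L K PQ) with hΛ
    have hΛbase : ∀ h : ↥(galPQ L K PQ),
        Λ (Monoid.PushoutI.base (amalgMaps L K PQ) h) = ↑h := by
      intro h
      simp only [hΛ, MonoidHom.comp_apply, amalgamToAPQ, Monoid.PushoutI.lift_base]
      rfl
    have hΛof : ∀ (b : Bool) (gg : ↥(cond b (galP L K PQ) (galQ L K PQ))),
        Λ (Monoid.PushoutI.of (φ := amalgMaps L K PQ) b gg) = ↑gg := by
      intro b gg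
      simp only [hΛ, MonoidHom.comp_apply, amalgamToAPQ, Monoid.PushoutI.lift_of]
      cases b <;> rfl
    have hinj : Function.Injective Λ := by
      rw [injective_iff_map_eq_one]
      intro x hx
      obtain ⟨d⟩ := Monoid.PushoutI.NormalWord.transversal_nonempty (amalgMaps L K PQ) hφinj
      set w : Monoid.PushoutI.NormalWord d := Monoid.PushoutI.NormalWord.equiv x with hwdef
      have hxw : w.prod = x := Monoid.PushoutI.NormalWord.equiv.symm_apply_apply x
      have hΛx : Λ x = (↑w.head : componentField L K PQ ≃ₐ[k] componentField L K PQ) *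
          ((w.toList.map fun p =>
            (↑p.2 : componentField L K PQ ≃ₐ[k] componentField L K PQ)).prod) := by
        conv_lhs => rw [← hxw]
        have h1 : w.prod = Monoid.PushoutI.base (amalgMaps L K PQ) w.head *
            Monoid.PushoutI.ofCoprodI (Monoid.CoprodI.Word.prod w.toWord) := rfl
        rw [h1, map_mul, hΛbase w.head]
        congr 1
        have h2 : Monoid.CoprodI.Word.prod w.toWord =
            (w.toList.map fun l => Monoid.CoprodI.of
              (M := fun b => ↥(cond b (galP L K PQ) (galQ L K PQ))) l.snd).prod := rfl
        rw [h2, ← MonoidHom.comp_apply, map_list_prod, List.map_map]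
        refine congrArg List.prod (List.map_congr_left ?_)
        intro p _
        show Λ (Monoid.PushoutI.ofCoprodI (Monoid.CoprodI.of p.2)) = _
        rw [Monoid.PushoutI.ofCoprodI_of]
        exact hΛof p.1 p.2
      rcases eq_or_ne w.toList [] with hemp | hne
      · -- empty normal word : `x` is in the image of the base group
        rw [hemp] at hΛx
        simp only [List.map_nil, List.prod_nil, mul_one] at hΛx
        have hh1 : w.head = 1 := by
          have hco : (↑w.head : componentField L K PQ ≃ₐ[k] componentField L K PQ) = 1 := by
            rw [← hΛx]; exact hx
          exact OneMemClass.coe_eq_one.mp hco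
        rw [← hxw]
        show Monoid.PushoutI.base (amalgMaps L K PQ) w.head *
          Monoid.PushoutI.ofCoprodI (Monoid.CoprodI.Word.prod w.toWord) = 1
        rw [hh1, show Monoid.CoprodI.Word.prod w.toWord =
          (w.toList.map fun l => Monoid.CoprodI.of
            (M := fun b => ↥(cond b (galP L K PQ) (galQ L K PQ))) l.snd).prod from rfl, hemp]
        simp
      · -- nonempty normal word : contradiction with the tree property
        exfalso
        have hchain := w.toWord.chain_ne
        have hcond : ∀ p ∈ w.toList,
            (↑p.2 : componentField L K PQ ≃ₐ[k] componentField L K PQ) ∉ galPQ L K PQ := by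
          intro p hp hmem
          have hr : p.2 ∈ (amalgMaps L K PQ p.1).range := by
            rcases p with ⟨b, gg⟩
            cases b
            · exact ⟨⟨↑gg, hmem⟩, Subtype.ext rfl⟩
            · exact ⟨⟨↑gg, hmem⟩, Subtype.ext rfl⟩
          have hset : p.2 ∈ d.set p.1 := w.normalized p.1 p.2 hp
          have hpair := (d.compl p.1).1 (a₁ := (⟨p.2, hr⟩, ⟨1, d.one_mem p.1⟩))
            (a₂ := (⟨1, ((amalgMaps L K PQ p.1).range).one_mem⟩, ⟨p.2, hset⟩)) (by simp)
          have hone : (1 : ↥(cond p.1 (galP L K PQ) (galQ L K PQ))) = p.2 := by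
            have := congrArg (fun z => (z.2 : ↥(cond p.1 (galP L K PQ) (galQ L K PQ)))) hpair
            simpa using this
          exact w.toWord.ne_one p hp hone.symm
        have halt := AmalgamAux.list_to_alt L K PQ w.toList hne hchain hcond
        have hprodinv : ((w.toList.map fun p =>
            (↑p.2 : componentField L K PQ ≃ₐ[k] componentField L K PQ)).prod) =
            (↑w.head : componentField L K PQ ≃ₐ[k] componentField L K PQ)⁻¹ := by
          have hx1 : (↑w.head : componentField L K PQ ≃ₐ[k] componentField L K PQ) *
              ((w.toList.map fun p =>
                (↑p.2 : componentField L K PQ ≃ₐ[k] componentField L K PQ)).prod) = 1 := by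
            rw [← hΛx]; exact hx
          exact (inv_eq_of_mul_eq_one_right hx1).symm
        have hgfix : AmalgamAux.actE L K PQ ((w.toList.map fun p =>
            (↑p.2 : componentField L K PQ ≃ₐ[k] componentField L K PQ)).prod)
            (AmalgamAux.PQt L K PQ) = AmalgamAux.PQt L K PQ := by
          rw [hprodinv]
          exact AmalgamAux.galPQ_fix L K PQ ((galPQ L K PQ).inv_mem w.head.2)
        exact AmalgamAux.final_contradiction L K PQ hmin htree.IsAcyclic halt hgfix
    intro a b hab
    exact hinj (by simp only [hΛ, MonoidHom.comp_apply, hab])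
  · -- **surjectivity**
    intro y
    have hy2 : (↑y : componentField L K PQ ≃ₐ[k] componentField L K PQ) ∈
        galP L K PQ ⊔ galQ L K PQ := y.2
    rw [Subgroup.sup_eq_closure] at hy2
    have hex : ∃ x : Monoid.PushoutI (amalgMaps L K PQ),
        ((amalgamToAPQ L K PQ x : ↥(APQ L K PQ)) :
          componentField L K PQ ≃ₐ[k] componentField L K PQ) = ↑y := by
      refine Subgroup.closure_induction ?_ ?_ ?_ ?_ hy2
      · rintro z (hz | hz)
        · refine ⟨Monoid.PushoutI.of (φ := amalgMaps L K PQ) true ⟨z, hz⟩, ?_⟩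
          simp only [amalgamToAPQ, Monoid.PushoutI.lift_of]
          rfl
        · refine ⟨Monoid.PushoutI.of (φ := amalgMaps L K PQ) false ⟨z, hz⟩, ?_⟩
          simp only [amalgamToAPQ, Monoid.PushoutI.lift_of]
          rfl
      · exact ⟨1, by simp⟩
      · rintro z1 z2 _ _ ⟨x1, hx1⟩ ⟨x2, hx2⟩
        exact ⟨x1 * x2, by rw [map_mul, Subgroup.coe_mul, hx1, hx2]⟩
      · rintro z _ ⟨x1, hx1⟩
        exact ⟨x1⁻¹, by rw [map_inv, Subgroup.coe_inv, hx1]⟩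
    obtain ⟨x, hx⟩ := hex
    exact ⟨x, Subtype.ext hx⟩
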